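/- The Coxeter-Catalan number of type D_n, namely (3n-2)·c_{n-1} where c_m is the m-th Catalan number, equals the Milnor number of the weak Weight (4, 2n, 6, 9, 12, ..., 3n-3 ; 6n), i.e., equals (6n-4)/4 · (6n-2n)/(2n) · ∏_{j=2}^{n-1} (6n-3j)/(3j). -/

import Mathlib

open Finset Nat

lemma aux_prod_id (m : ℕ) : ∏ j ∈ Finset.Icc 2 (m + 1), j = (m + 1)! := by
  induction m with
  | zero => simp [Finset.Icc_self]
  | succ k ih =>
      rw [Finset.prod_Icc_succ_top (by omega), ih, mul_comm]
      exact (Nat.factorial_succ (k + 1)).symm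

lemma aux_prod_sub : ∀ (t a : ℕ), t + 2 ≤ a →
    (∏ j ∈ Finset.Icc 2 (t + 1), (a - j)) * (a - t - 2)! = (a - 2)! := by
  intro t
  induction t with
  | zero => intro a ha; simp
  | succ k ih =>
      intro a ha
      rw [Finset.prod_Icc_succ_top (by omega)]
      have h1 : a - (k + 1) - 2 = a - k - 3 := by omega
      have h2 : (a - (k + 2)) * (a - k - 3)! = (a - k - 2)! := by
        rw [show a - k - 2 = (a - k - 3) + 1 by omega, Nat.factorial_succ,
          show a - (k + 2) = a - k - 3 + 1 by omega]
      rw [h1, mul_assoc, h2]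
      exact ih a (by omega)

theorem stmt_5 (n : ℕ) (hn : 2 ≤ n) :
    ((3 * n - 2 : ℚ)) * (catalan (n - 1)) =
      ((6 * n - 4 : ℚ) / 4) * ((6 * n - 2 * n : ℚ) / (2 * n)) *
        ∏ j ∈ Finset.Icc 2 (n - 1), ((6 * n - 3 * j : ℚ) / (3 * j : ℚ)) := by
  obtain ⟨m, rfl⟩ : ∃ m, n = m + 2 := ⟨n - 2, by omega⟩
  have hn1 : m + 2 - 1 = m + 1 := by omega
  rw [hn1]
  -- nat facts
  have hQ : ∏ j ∈ Finset.Icc 2 (m + 1), j = (m + 1)! := aux_prod_id m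
  have hP : (∏ j ∈ Finset.Icc 2 (m + 1), (2 * (m + 2) - j)) * (m + 2)! = (2 * m + 2)! := by
    have := aux_prod_sub m (2 * (m + 2)) (by omega)
    have e1 : 2 * (m + 2) - m - 2 = m + 2 := by omega
    have e2 : 2 * (m + 2) - 2 = 2 * m + 2 := by omega
    rwa [e1, e2] at this
  have hc : catalan (m + 1) * (m + 1)! * (m + 2)! = (2 * m + 2)! := by
    have hcb := succ_mul_catalan_eq_centralBinom (m + 1)
    have hch := Nat.choose_mul_factorial_mul_factorial (show m + 1 ≤ 2 * m + 2 by omega)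
    have : (2 * m + 2) - (m + 1) = m + 1 := by omega
    rw [this] at hch
    calc catalan (m + 1) * (m + 1)! * (m + 2)!
        = ((m + 1 + 1) * catalan (m + 1)) * (m + 1)! * (m + 1)! := by
          rw [show (m + 2)! = (m + 1 + 1) * (m + 1)! from Nat.factorial_succ (m + 1)]; ring
      _ = Nat.centralBinom (m + 1) * (m + 1)! * (m + 1)! := by rw [hcb]
      _ = (2 * m + 2)! := by
          rw [Nat.centralBinom]
          have : 2 * (m + 1) = 2 * m + 2 := by ring
          rw [this, hch]
  have key : catalan (m + 1) * ∏ j ∈ Finset.Icc 2 (m + 1), j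
      = ∏ j ∈ Finset.Icc 2 (m + 1), (2 * (m + 2) - j) := by
    have h2 : (0 : ℕ) < (m + 2)! := Nat.factorial_pos _
    apply Nat.eq_of_mul_eq_mul_right h2
    rw [hP, hQ, ← hc]
  -- rewrite each factor of the ℚ product
  have hprod : ∏ j ∈ Finset.Icc 2 (m + 1), ((6 * ((m + 2 : ℕ) : ℚ) - 3 * j) / (3 * j))
      = ((∏ j ∈ Finset.Icc 2 (m + 1), (2 * (m + 2) - j) : ℕ) : ℚ)
        / ((∏ j ∈ Finset.Icc 2 (m + 1), j : ℕ) : ℚ) := by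
    rw [Nat.cast_prod, Nat.cast_prod, ← Finset.prod_div_distrib]
    apply Finset.prod_congr rfl
    intro j hj
    simp only [Finset.mem_Icc] at hj
    have hj0 : (j : ℚ) ≠ 0 := by
      have : j ≠ 0 := by omega
      exact_mod_cast this
    rw [Nat.cast_sub (by omega : j ≤ 2 * (m + 2))]
    push_cast
    field_simp
    ring
  have key2 : (∏ j ∈ Finset.Icc 2 (m + 1), (2 * (m + 2) - j)) = catalan (m + 1) * (m + 1)! := by
    rw [← key, hQ]
  rw [hprod, hQ, key2]
  have hf : ((m + 1)! : ℚ) ≠ 0 := by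
    exact_mod_cast (Nat.factorial_pos (m + 1)).ne'
  push_cast
  have hm2 : ((m : ℚ) + 2) ≠ 0 := by positivity
  field_simp
  ring
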